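/- Let A be an n×n real matrix, B an n×m real matrix, U ⊆ ℝᵐ, W ⊆ ℝⁿ, X ⊆ ℝⁿ, N ≥ 1, and define the tightened constraint sets X(0) = X and X(k) = {x ∈ X(k−1) | ∀ w ∈ W, x + A^{k−1} w ∈ X(k−1)} for k ≥ 1. Let X_T ⊆ X(N) be a terminal set admitting a robust local controller κ_L : ℝⁿ → ℝᵐ such that for every x ∈ X_T and w ∈ W, the point y = x + A^{N−1} w satisfies κ_L(y) ∈ U and A y + B κ_L(y) ∈ X_T. Let X_F be the set of states x₀ admitting a feasible control sequence (u_k ∈ U with nominal states x_0 = x₀, x_{k+1} = A x_k + B u_k satisfying x_k ∈ X(k) for 0 ≤ k ≤ N and x_N ∈ X_T), and let κ : ℝⁿ → ℝᵐ be any controller that, for each x ∈ X_F, returns the first input of some feasible control sequence for x. Define X'_F = {x ∈ X_F | ∀ w ∈ W, A x + w ∈ X_F}. Then every trajectory x : ℕ → ℝⁿ with x(t+1) = A x(t) + B u(t) + w(t), w(t) ∈ W, x(0) ∈ X_F, in which at each step either u(t) = κ(x(t)), or u(t) = 0 and x(t) ∈ X'_F, satisfies x(t) ∈ X_F ⊆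 X for all t ∈ ℕ. -/

import Mathlib

/-- A control sequence `u` is feasible for initial state `x₀` in the RMPC with
horizon `N`: inputs lie in `U`, the nominal states `x_{k+1} = A x_k + B u_k`
satisfy the tightened constraints `Xk k` for `0 ≤ k ≤ N`, and the terminal
nominal state lies in the terminal set `XT`. -/
def RMPCFeasible {n m : ℕ}
    (A : Matrix (Fin n) (Fin n) ℝ) (B : Matrix (Fin n) (Fin m) ℝ)
    (U : Set (Fin m → ℝ)) (Xk : ℕ → Set (Fin n → ℝ)) (XT : Set (Fin n → ℝ))
    (N : ℕ) (x₀ : Fin n → ℝ) (u : ℕ → (Fin m → ℝ)) : Prop :=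
  (∀ k < N, u k ∈ U) ∧
  ∃ xs : ℕ → (Fin n → ℝ), xs 0 = x₀ ∧
    (∀ k < N, xs (k + 1) = A.mulVec (xs k) + B.mulVec (u k)) ∧
    (∀ k ≤ N, xs k ∈ Xk k) ∧ xs N ∈ XT

/-- Combination of Theorem 1 and Proposition 1: with RMPC as the underlying
safe controller, the opportunistic intermittent-control framework (apply the
RMPC input, or skip with zero input when the state is in the strengthened safe
set `X'_F = B(X_F,0) ∩ X_F`) keeps every trajectory starting in the feasible
set `X_F` inside `X_F ⊆ X` forever. -/
theorem intermittent_rmpc_safety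
    {n m : ℕ}
    (A : Matrix (Fin n) (Fin n) ℝ) (B : Matrix (Fin n) (Fin m) ℝ)
    (U : Set (Fin m → ℝ)) (W : Set (Fin n → ℝ)) (X : Set (Fin n → ℝ))
    (N : ℕ) (hN : 1 ≤ N)
    (Xk : ℕ → Set (Fin n → ℝ))
    (hXk0 : Xk 0 = X)
    (hXk : ∀ k, Xk (k + 1) = {x ∈ Xk k | ∀ w ∈ W, x + (A ^ k).mulVec w ∈ Xk k})
    (XT : Set (Fin n → ℝ)) (hXT : XT ⊆ Xk N)
    (κL : (Fin n → ℝ) → (Fin m → ℝ))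
    (hκL : ∀ x ∈ XT, ∀ w ∈ W,
      κL (x + (A ^ (N - 1)).mulVec w) ∈ U ∧
      A.mulVec (x + (A ^ (N - 1)).mulVec w) +
        B.mulVec (κL (x + (A ^ (N - 1)).mulVec w)) ∈ XT)
    (XF : Set (Fin n → ℝ))
    (hXF : XF = {x₀ | ∃ u, RMPCFeasible A B U Xk XT N x₀ u})
    (κ : (Fin n → ℝ) → (Fin m → ℝ))
    (hκ : ∀ x ∈ XF, ∃ u, RMPCFeasible A B U Xk XT N x u ∧ κ x = u 0)
    (XF' : Set (Fin n → ℝ))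
    (hXF' : XF' = {x ∈ XF | ∀ w ∈ W, A.mulVec x + w ∈ XF})
    (x : ℕ → (Fin n → ℝ)) (u : ℕ → (Fin m → ℝ)) (w : ℕ → (Fin n → ℝ))
    (hdyn : ∀ t, x (t + 1) = A.mulVec (x t) + B.mulVec (u t) + w t)
    (hw : ∀ t, w t ∈ W)
    (hu : ∀ t, u t = κ (x t) ∨ (u t = 0 ∧ x t ∈ XF'))
    (h0 : x 0 ∈ XF) :
    ∀ t, x t ∈ XF ∧ x t ∈ X := by
  obtain ⟨M, rfl⟩ : ∃ M, N = M + 1 := ⟨N - 1, (Nat.succ_pred_eq_of_pos hN).symm⟩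
  have hsub : ∀ y ∈ XF, y ∈ X := by
    intro y hy
    rw [hXF] at hy
    obtain ⟨u', _, xs, hxs0, _, hstate, _⟩ := hy
    have := hstate 0 (Nat.zero_le _)
    rwa [hxs0, hXk0] at this
  have key : ∀ y ∈ XF, ∀ wv ∈ W, A.mulVec y + B.mulVec (κ y) + wv ∈ XF := by
    intro y hy wv hwv
    obtain ⟨u', hfeas, hκ0⟩ := hκ y hy
    obtain ⟨huU, xs, hxs0, hdyn', hstate, hterm⟩ := hfeas
    have hMsub : M + 1 - 1 = M := rfl
    rw [hMsub] at hκL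
    set z : Fin n → ℝ := xs (M + 1) + (A ^ M).mulVec wv with hz
    have hκLz := hκL (xs (M + 1)) hterm wv hwv
    refine hXF ▸ ⟨fun k => if k < M then u' (k + 1) else κL z, ?_,
      fun k => if k ≤ M then xs (k + 1) + (A ^ k).mulVec wv
        else A.mulVec z + B.mulVec (κL z), ?_, ?_, ?_, ?_⟩
    · intro k hk
      by_cases h : k < M
      · simp only [h, if_pos]
        exact huU (k + 1) (by omega)
      · simp only [h, if_neg, if_false]
        exact hκLz.1
    · simp only [if_pos (Nat.zero_le M), pow_zero, Matrix.one_mulVec]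
      rw [hdyn' 0 (Nat.succ_pos M), hxs0, hκ0]
    · intro k hk
      by_cases h : k < M
      · have h1 : k ≤ M := le_of_lt h
        have h2 : k + 1 ≤ M := h
        simp only [h1, h2, h, if_pos]
        rw [hdyn' (k + 1) (by omega), Matrix.mulVec_add, pow_succ' A k,
          ← Matrix.mulVec_mulVec]
        abel
      · have hkM : k = M := by omega
        subst hkM
        simp only [le_refl, if_pos, lt_irrefl, if_false, ite_true, ite_false,
          Nat.not_succ_le_self, if_true, if_neg (Nat.not_succ_le_self _)]
        rfl
    · intro k hk
      by_cases h : k ≤ M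
      · simp only [h, if_pos]
        have h1 := hstate (k + 1) (by omega)
        rw [hXk k] at h1
        exact h1.2 wv hwv
      · have hkM : k = M + 1 := by omega
        subst hkM
        simp only [if_neg (Nat.not_succ_le_self M)]
        exact hXT hκLz.2
    · simp only [if_neg (Nat.not_succ_le_self M)]
      exact hκLz.2
  have main : ∀ t, x t ∈ XF := by
    intro t
    induction t with
    | zero => exact h0
    | succ t ih =>
      rcases hu t with h | ⟨h, hx'⟩
      · rw [hdyn t, h]
        exact key (x t) ih (w t) (hw t)
      · rw [hdyn t, h, Matrix.mulVec_zero, add_zero]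
        rw [hXF'] at hx'
        exact hx'.2 (w t) (hw t)
  exact fun t => ⟨main t, hsub (x t) (main t)⟩
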